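/- arXiv:1601.00255 — 2 statements merged into one kernel-verified Lean document; each statement's English description precedes it below -/
import Mathlib

section
/- Let x : ℝ → ℝ^N be a differentiable curve and e : ℝ → ℝ^m a continuous curve satisfying x'(t) = A x(t) + B e(t) for all t, where A is an N×N real matrix and B an N×m real matrix. Suppose P and Q are symmetric positive definite N×N real matrices satisfying the Lyapunov equation Aᵀ P + P A = −Q, and let λ_min(Q) > 0 denote the smallest eigenvalue of Q. Then for every t, d/dt ( x(t)ᵀ P x(t) ) ≤ −(λ_min(Q)/2) ‖x(t)‖² + (2/λ_min(Q)) ‖Bᵀ Pᵀ P B‖ ‖e(t)‖². -/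
open Matrix
open scoped RealInnerProductSpace

/-- Multiplication of a vector in Euclidean space by a real matrix. -/
noncomputable def matVec {a b : ℕ} (M : Matrix (Fin a) (Fin b) ℝ)
    (v : EuclideanSpace ℝ (Fin b)) : EuclideanSpace ℝ (Fin a) :=
  Matrix.toEuclideanLin M v

/-- The operator norm of a real matrix, induced by the Euclidean norms. -/
noncomputable def opNorm {a b : ℕ} (M : Matrix (Fin a) (Fin b) ℝ) : ℝ :=
  ‖LinearMap.toContinuousLinearMap (Matrix.toEuclideanLin M)‖


lemma matVec_mulMat {a b c : ℕ} (M : Matrix (Fin a) (Fin b) ℝ) (N : Matrix (Fin b) (Fin c) ℝ)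
    (v : EuclideanSpace ℝ (Fin c)) : matVec (M * N) v = matVec M (matVec N v) := by
  simp [matVec, Matrix.toEuclideanLin_apply, Matrix.mulVec_mulVec]

lemma matVec_add {a b : ℕ} (M N : Matrix (Fin a) (Fin b) ℝ) (v : EuclideanSpace ℝ (Fin b)) :
    matVec (M + N) v = matVec M v + matVec N v := by
  simp [matVec, map_add]

lemma matVec_neg {a b : ℕ} (M : Matrix (Fin a) (Fin b) ℝ) (v : EuclideanSpace ℝ (Fin b)) :
    matVec (-M) v = -matVec M v := by
  simp [matVec, map_neg]

lemma matVec_add_vec {a b : ℕ} (M : Matrix (Fin a) (Fin b) ℝ) (v w : EuclideanSpace ℝ (Fin b)) :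
    matVec M (v + w) = matVec M v + matVec M w := by
  simp [matVec, map_add]

lemma inner_matVec_left {a b : ℕ} (M : Matrix (Fin a) (Fin b) ℝ) (u : EuclideanSpace ℝ (Fin b))
    (v : EuclideanSpace ℝ (Fin a)) : ⟪matVec M u, v⟫ = ⟪u, matVec Mᵀ v⟫ := by
  have h : Mᵀ = Mᴴ := (Matrix.conjTranspose_eq_transpose_of_trivial M).symm
  rw [matVec, matVec, h, Matrix.toEuclideanLin_conjTranspose_eq_adjoint,
    LinearMap.adjoint_inner_right]

lemma norm_matVec_le {a b : ℕ} (M : Matrix (Fin a) (Fin b) ℝ) (v : EuclideanSpace ℝ (Fin b)) :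
    ‖matVec M v‖ ≤ opNorm M * ‖v‖ :=
  (LinearMap.toContinuousLinearMap (Matrix.toEuclideanLin M)).le_opNorm v

lemma lam_le_inner_matVec {n : ℕ} {Q : Matrix (Fin n) (Fin n) ℝ} (hQ : Q.IsHermitian)
    {lam : ℝ} (hlam : ∀ i, lam ≤ hQ.eigenvalues i) (v : EuclideanSpace ℝ (Fin n)) :
    lam * ‖v‖ ^ 2 ≤ ⟪v, matVec Q v⟫ := by
  set b := hQ.eigenvectorBasis with hb
  have hQT : Qᵀ = Q := by
    rw [← Matrix.conjTranspose_eq_transpose_of_trivial]; exact hQ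
  have hQb : ∀ i, matVec Q (b i) = hQ.eigenvalues i • b i := fun i => by
    have h := hQ.mulVec_eigenvectorBasis i
    rw [hb, matVec, Matrix.toEuclideanLin_apply, h]
    simp only [WithLp.toLp_smul, WithLp.toLp_ofLp]
  have h1 : ⟪v, matVec Q v⟫ = ∑ i, hQ.eigenvalues i * (⟪v, b i⟫ * ⟪b i, v⟫) := by
    rw [← b.sum_inner_mul_inner v (matVec Q v)]
    congr 1; funext i
    have : ⟪b i, matVec Q v⟫ = hQ.eigenvalues i * ⟪b i, v⟫ := by
      have h3 : ⟪b i, matVec Q v⟫ = ⟪matVec Qᵀ (b i), v⟫ := by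
        rw [inner_matVec_left, Matrix.transpose_transpose]
      rw [h3, hQT, hQb i, real_inner_smul_left]
    rw [this]; ring
  have h2 : ‖v‖ ^ 2 = ∑ i, ⟪v, b i⟫ * ⟪b i, v⟫ := by
    rw [b.sum_inner_mul_inner v v, real_inner_self_eq_norm_sq]
  rw [h1, h2, Finset.mul_sum]
  apply Finset.sum_le_sum
  intro i _
  have hnn : 0 ≤ ⟪v, b i⟫ * ⟪b i, v⟫ := by
    rw [real_inner_comm v (b i)]; exact mul_self_nonneg _
  exact mul_le_mul_of_nonneg_right (hlam i) hnn

/-- If `x' = A x + B e`, `P, Q ≻ 0` are symmetric with `Aᵀ P + P A = -Q`, and `λ_min(Q)`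
is the smallest eigenvalue of `Q`, then
`d/dt (xᵀ P x) ≤ -(λ_min(Q)/2) ‖x‖² + (2/λ_min(Q)) ‖Bᵀ Pᵀ P B‖ ‖e‖²`. -/
theorem lyapunov_derivative_bound {N m : ℕ}
    (A P Q : Matrix (Fin N) (Fin N) ℝ) (B : Matrix (Fin N) (Fin m) ℝ)
    (hP : P.PosDef) (hQ : Q.PosDef)
    (hLyap : Aᵀ * P + P * A = -Q)
    (lamQ : ℝ) (hlamQ : IsLeast (Set.range hQ.1.eigenvalues) lamQ) (hlamQpos : 0 < lamQ)
    (x : ℝ → EuclideanSpace ℝ (Fin N)) (e : ℝ → EuclideanSpace ℝ (Fin m))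
    (he : Continuous e)
    (hx : ∀ t, HasDerivAt x (matVec A (x t) + matVec B (e t)) t)
    (t : ℝ) :
    deriv (fun s => ⟪x s, matVec P (x s)⟫) t ≤
      -(lamQ / 2) * ‖x t‖ ^ 2 + (2 / lamQ) * opNorm (Bᵀ * Pᵀ * P * B) * ‖e t‖ ^ 2 := by
  have hPT : Pᵀ = P := by
    rw [← Matrix.conjTranspose_eq_transpose_of_trivial]; exact hP.1
  set u := x t with hu
  set w := e t with hw
  -- derivative of the quadratic form
  have hPx : HasDerivAt (fun s => matVec P (x s))
      (matVec P (matVec A u) + matVec P (matVec B w)) t := by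
    have h := (LinearMap.toContinuousLinearMap
      (Matrix.toEuclideanLin P)).hasFDerivAt.comp_hasDerivAt t (hx t)
    simpa [matVec, Function.comp_def, map_add] using h
  have hD : HasDerivAt (fun s => ⟪x s, matVec P (x s)⟫)
      (⟪u, matVec P (matVec A u) + matVec P (matVec B w)⟫
        + ⟪matVec A u + matVec B w, matVec P u⟫) t := (hx t).inner ℝ hPx
  rw [hD.deriv]
  set z := matVec (P * B) w with hz
  -- algebraic identity for the derivative
  have hderiv : ⟪u, matVec P (matVec A u) + matVec P (matVec B w)⟫
        + ⟪matVec A u + matVec B w, matVec P u⟫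
      = -⟪u, matVec Q u⟫ + 2 * ⟪u, z⟫ := by
    have e1 : ⟪u, matVec P (matVec A u) + matVec P (matVec B w)⟫
        = ⟪u, matVec (P * A) u⟫ + ⟪u, z⟫ := by
      rw [inner_add_right, ← matVec_mulMat, ← matVec_mulMat]
    have e2 : ⟪matVec A u + matVec B w, matVec P u⟫
        = ⟪u, matVec (Aᵀ * P) u⟫ + ⟪u, z⟫ := by
      rw [inner_add_left]
      congr 1
      · rw [inner_matVec_left, ← matVec_mulMat]
      · rw [real_inner_comm, inner_matVec_left, hPT, ← matVec_mulMat]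
    have e3 : ⟪u, matVec (P * A) u⟫ + ⟪u, matVec (Aᵀ * P) u⟫ = -⟪u, matVec Q u⟫ := by
      rw [← inner_add_right, ← matVec_add, add_comm (P * A), hLyap, matVec_neg,
        inner_neg_right]
    rw [e1, e2]; linarith [e3]
  rw [hderiv]
  -- eigenvalue lower bound
  have hQb : lamQ * ‖u‖ ^ 2 ≤ ⟪u, matVec Q u⟫ := by
    refine lam_le_inner_matVec hQ.1 (fun i => ?_) u
    exact hlamQ.2 ⟨i, rfl⟩
  -- bound on ‖z‖²
  have hzb : ‖z‖ ^ 2 ≤ opNorm (Bᵀ * Pᵀ * P * B) * ‖w‖ ^ 2 := by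
    have h1 : ‖z‖ ^ 2 = ⟪w, matVec (Bᵀ * Pᵀ * P * B) w⟫ := by
      rw [← real_inner_self_eq_norm_sq, hz, inner_matVec_left, ← matVec_mulMat,
        Matrix.transpose_mul, ← Matrix.mul_assoc]
    have h2 : ⟪w, matVec (Bᵀ * Pᵀ * P * B) w⟫ ≤ ‖w‖ * ‖matVec (Bᵀ * Pᵀ * P * B) w‖ :=
      real_inner_le_norm _ _
    have h3 := norm_matVec_le (Bᵀ * Pᵀ * P * B) w
    nlinarith [norm_nonneg w]
  have hcs : ⟪u, z⟫ ≤ ‖u‖ * ‖z‖ := real_inner_le_norm u z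
  -- Young's inequality
  have hyoung : 2 * (‖u‖ * ‖z‖) ≤ lamQ / 2 * ‖u‖ ^ 2 + 2 / lamQ * ‖z‖ ^ 2 := by
    have key : lamQ / 2 * ‖u‖ ^ 2 + 2 / lamQ * ‖z‖ ^ 2 - 2 * (‖u‖ * ‖z‖)
        = (lamQ * ‖u‖ - 2 * ‖z‖) ^ 2 / (2 * lamQ) := by
      field_simp
      ring
    nlinarith [div_nonneg (sq_nonneg (lamQ * ‖u‖ - 2 * ‖z‖)) (by linarith : (0:ℝ) ≤ 2 * lamQ)]
  have hmul : 2 / lamQ * ‖z‖ ^ 2 ≤ 2 / lamQ * (opNorm (Bᵀ * Pᵀ * P * B) * ‖w‖ ^ 2) :=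
    mul_le_mul_of_nonneg_left hzb (by positivity)
  nlinarith [hQb, hcs, hyoung, hmul]
end

section
/- (Positive lower bound on the inter-event time, Theorem 2.) Let M₁, M₂, M₃ > 0 be constants and let u : [0, ∞) → ℝ be a differentiable function with u(0) = 0 and u'(t) ≤ M₁ u(t)² + M₃ u(t) + M₂ for all t ≥ 0. Fix a threshold θ > 0 and set τ₀ = θ / (M₁ θ² + M₃ θ + M₂) > 0. Then u(t) < θ for all t ∈ [0, τ₀); in particular, the first time at which u reaches the value θ is bounded below by the positive constant τ₀, so the inter-event time of the event-triggered scheme is strictly positive. -/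
/-- Positive lower bound on the inter-event time (Theorem 2): if `u(0) = 0` and
`u' ≤ M₁ u² + M₃ u + M₂` on `[0, ∞)` with `M₁, M₂, M₃ > 0`, and `θ > 0`, then with
`τ₀ = θ / (M₁ θ² + M₃ θ + M₂)` one has `τ₀ > 0` and `u(t) < θ` for all `t ∈ [0, τ₀)`;
hence the first hitting time of the threshold `θ` is at least `τ₀ > 0`. -/
theorem inter_event_time_positive_lower_bound (M₁ M₂ M₃ : ℝ)
    (hM₁ : 0 < M₁) (hM₂ : 0 < M₂) (hM₃ : 0 < M₃)
    (u u' : ℝ → ℝ) (hu0 : u 0 = 0)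
    (hu : ∀ t, 0 ≤ t → HasDerivAt u (u' t) t)
    (hub : ∀ t, 0 ≤ t → u' t ≤ M₁ * u t ^ 2 + M₃ * u t + M₂)
    (θ : ℝ) (hθ : 0 < θ)
    (τ₀ : ℝ) (hτ₀ : τ₀ = θ / (M₁ * θ ^ 2 + M₃ * θ + M₂)) :
    0 < τ₀ ∧ ∀ t, 0 ≤ t → t < τ₀ → u t < θ := by
  set K : ℝ := M₁ * θ ^ 2 + M₃ * θ + M₂ with hK
  have hKpos : 0 < K := by positivity
  have hτpos : 0 < τ₀ := by rw [hτ₀]; positivity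
  refine ⟨hτpos, fun t ht htτ => ?_⟩
  by_contra hcon
  push_neg at hcon
  -- continuity of u on [0, t]
  have hucont : ContinuousOn u (Set.Icc 0 t) := fun r hr =>
    ((hu r hr.1).continuousAt).continuousWithinAt
  -- first hitting time s of θ within [0, t]
  set S : Set ℝ := Set.Icc 0 t ∩ u ⁻¹' Set.Ici θ with hS
  have hSne : S.Nonempty := ⟨t, ⟨ht, le_rfl⟩, hcon⟩
  have hSclosed : IsClosed S :=
    hucont.preimage_isClosed_of_isClosed isClosed_Icc isClosed_Ici
  have hSbdd : BddBelow S := ⟨0, fun x hx => hx.1.1⟩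
  set s : ℝ := sInf S with hs
  have hsS : s ∈ S := hSclosed.csInf_mem hSne hSbdd
  have hs0 : 0 ≤ s := hsS.1.1
  have hst : s ≤ t := hsS.1.2
  have hsu : θ ≤ u s := hsS.2
  have hlt : ∀ r, 0 ≤ r → r < s → u r < θ := by
    intro r hr0 hrs
    by_contra h
    push_neg at h
    exact absurd (csInf_le hSbdd ⟨⟨hr0, hrs.le.trans hst⟩, h⟩) (not_le.mpr hrs)
  -- last zero s₀ before s
  set T : Set ℝ := Set.Icc 0 s ∩ u ⁻¹' Set.Iic 0 with hT
  have hTne : T.Nonempty := ⟨0, ⟨le_rfl, hs0⟩, by simp [hu0]⟩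
  have hTclosed : IsClosed T :=
    (hucont.mono (Set.Icc_subset_Icc le_rfl hst)).preimage_isClosed_of_isClosed
      isClosed_Icc isClosed_Iic
  have hTbdd : BddAbove T := ⟨s, fun x hx => hx.1.2⟩
  set s₀ : ℝ := sSup T with hs₀
  have hs₀T : s₀ ∈ T := hTclosed.csSup_mem hTne hTbdd
  have hs₀0 : 0 ≤ s₀ := hs₀T.1.1
  have hs₀s : s₀ ≤ s := hs₀T.1.2
  have hs₀u : u s₀ ≤ 0 := hs₀T.2
  have hpos : ∀ r, s₀ < r → r ≤ s → 0 < u r := by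
    intro r hr hrs
    by_contra h
    push_neg at h
    exact absurd (le_csSup hTbdd ⟨⟨hs₀0.trans hr.le, hrs⟩, h⟩) (not_le.mpr hr)
  -- the function h r = K * r - u r is monotone on [s₀, s]
  have hmono : MonotoneOn (fun r => K * r - u r) (Set.Icc s₀ s) := by
    apply monotoneOn_of_deriv_nonneg (convex_Icc s₀ s)
    · exact (continuousOn_const.mul continuousOn_id).sub
        (hucont.mono (Set.Icc_subset_Icc hs₀0 hst))
    · intro r hr
      rw [interior_Icc] at hr
      have hr0 : 0 ≤ r := hs₀0.trans hr.1.le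
      exact (((hasDerivAt_id r).const_mul K).sub (hu r hr0)).differentiableAt.differentiableWithinAt
    · intro r hr
      rw [interior_Icc] at hr
      have hr0 : 0 ≤ r := hs₀0.trans hr.1.le
      have hd : deriv (fun r => K * r - u r) r = K - u' r := by
        have := (((hasDerivAt_id r).const_mul K).sub (hu r hr0))
        rw [show K - u' r = K * 1 - u' r by ring]
        exact this.deriv
      rw [hd]
      have h1 : 0 < u r := hpos r hr.1 hr.2.le
      have h2 : u r < θ := hlt r hr0 hr.2
      have h3 : u' r ≤ M₁ * u r ^ 2 + M₃ * u r + M₂ := hub r hr0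
      nlinarith [hK, mul_nonneg hM₁.le (mul_nonneg (sub_nonneg.mpr h2.le) (add_pos hθ h1).le),
        mul_nonneg hM₃.le (sub_nonneg.mpr h2.le)]
  have key : K * s₀ - u s₀ ≤ K * s - u s :=
    hmono ⟨le_rfl, hs₀s⟩ ⟨hs₀s, le_rfl⟩ hs₀s
  -- combine: θ ≤ u s - u s₀ ≤ K (s - s₀) ≤ K t < K τ₀ = θ
  have hKτ : K * τ₀ = θ := by
    rw [hτ₀]; field_simp
  nlinarith [mul_lt_mul_of_pos_left htτ hKpos, mul_nonneg hKpos.le hs₀0]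
end
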